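/- Let 0 ≤ a₁ < a₂ < a₃ < 2π be angles on a circle with a₂ − a₁ < π, a₃ − a₂ < π, and a₃ − a₁ > π (so the inscribed triangle with vertices at these angles is acute), and assume the three arc lengths a₂ − a₁, a₃ − a₂, 2π − (a₃ − a₁) are pairwise distinct (so the triangle is scalene). Then there exist masses m₁, m₂, m₃ > 0 such that for each i ∈ {1,2,3}, ∑_{j ≠ i} m_j · sin(a_j − a_i) / |sin(a_j − a_i)|³ = 0. -/

import Mathlib

open Real

/-- For every acute scalene triangle inscribed in the equator (vertices at angles
`a₁ < a₂ < a₃`), there exist positive masses making the equatorial relative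
equilibrium equations hold. -/
theorem exists_masses_equatorial_relative_equilibrium
    (a₁ a₂ a₃ : ℝ) (h0 : 0 ≤ a₁) (h12 : a₁ < a₂) (h23 : a₂ < a₃) (h3 : a₃ < 2 * Real.pi)
    (hacute12 : a₂ - a₁ < Real.pi) (hacute23 : a₃ - a₂ < Real.pi)
    (hacute13 : a₃ - a₁ > Real.pi)
    (hscalene1 : a₂ - a₁ ≠ a₃ - a₂)
    (hscalene2 : a₂ - a₁ ≠ 2 * Real.pi - (a₃ - a₁))
    (hscalene3 : a₃ - a₂ ≠ 2 * Real.pi - (a₃ - a₁)) :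
    ∃ m₁ m₂ m₃ : ℝ, 0 < m₁ ∧ 0 < m₂ ∧ 0 < m₃ ∧
      m₂ * Real.sin (a₂ - a₁) / |Real.sin (a₂ - a₁)| ^ 3
        + m₃ * Real.sin (a₃ - a₁) / |Real.sin (a₃ - a₁)| ^ 3 = 0 ∧
      m₁ * Real.sin (a₁ - a₂) / |Real.sin (a₁ - a₂)| ^ 3
        + m₃ * Real.sin (a₃ - a₂) / |Real.sin (a₃ - a₂)| ^ 3 = 0 ∧
      m₁ * Real.sin (a₁ - a₃) / |Real.sin (a₁ - a₃)| ^ 3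
        + m₂ * Real.sin (a₂ - a₃) / |Real.sin (a₂ - a₃)| ^ 3 = 0 := by
  have hA : 0 < Real.sin (a₂ - a₁) :=
    Real.sin_pos_of_pos_of_lt_pi (by linarith) hacute12
  have hB : 0 < Real.sin (a₃ - a₂) :=
    Real.sin_pos_of_pos_of_lt_pi (by linarith) hacute23
  have hC : Real.sin (a₃ - a₁) < 0 := by
    have h1 : 0 < Real.sin (a₃ - a₁ - Real.pi) :=
      Real.sin_pos_of_pos_of_lt_pi (by linarith) (by linarith)
    have h2 : Real.sin (a₃ - a₁ - Real.pi) = -Real.sin (a₃ - a₁) := by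
      rw [Real.sin_sub, Real.sin_pi, Real.cos_pi]; ring
    linarith
  set A := Real.sin (a₂ - a₁) with hAdef
  set B := Real.sin (a₃ - a₂) with hBdef
  set C := Real.sin (a₃ - a₁) with hCdef
  have e12 : Real.sin (a₁ - a₂) = -A := by rw [hAdef, ← Real.sin_neg]; ring_nf
  have e13 : Real.sin (a₁ - a₃) = -C := by rw [hCdef, ← Real.sin_neg]; ring_nf
  have e23 : Real.sin (a₂ - a₃) = -B := by rw [hBdef, ← Real.sin_neg]; ring_nf
  have hA0 : A ≠ 0 := hA.ne'
  have hB0 : B ≠ 0 := hB.ne'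
  have hC0 : C ≠ 0 := hC.ne
  have hCC : C ^ 3 * C⁻¹ ^ 3 = 1 := by
    rw [← mul_pow, mul_inv_cancel₀ hC0, one_pow]
  refine ⟨A^2 * C^2, A^2 * B^2, B^2 * C^2, by positivity, by positivity, by positivity,
    ?_, ?_, ?_⟩
  · rw [abs_of_pos hA, abs_of_neg hC]
    field_simp
    ring
  · rw [e12, abs_neg, abs_of_pos hA, abs_of_pos hB]
    field_simp
    ring
  · rw [e13, e23, abs_neg, abs_neg, abs_of_neg hC, abs_of_pos hB]
    field_simp
    ring
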